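/- arXiv:1804.07274 — 2 statements merged into one kernel-verified Lean document; each statement's English description precedes it below -/
import Mathlib

section
/- If a term t contains no n-cyclic subterm over a signature with k unary function symbols and one constant, then dep(t) ≤ n·k. -/
/-- Terms over `k` unary function symbols and a single constant. -/
inductive UTerm (k : ℕ) : Type
  | const : UTerm k
  | fn : Fin k → UTerm k → UTerm k

namespace UTerm

def dep {k : ℕ} : UTerm k → ℕ
  | const => 0
  | fn _ t => 1 + dep t

inductive Subterm {k : ℕ} : UTerm k → UTerm k → Prop
  | refl (t : UTerm k) : Subterm t t
  | fn {t s : UTerm k} {f : Fin k} : Subterm t s → Subterm t (UTerm.fn f s)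

def ProperSubterm {k : ℕ} (s t : UTerm k) : Prop :=
  Subterm s t ∧ s ≠ t

def NCyclic {k : ℕ} (n : ℕ) (t : UTerm k) : Prop :=
  ∃ (f : Fin k) (s : ℕ → UTerm k),
    Subterm (UTerm.fn f (s (n + 1))) t ∧
    ∀ i, 1 ≤ i → i ≤ n → ProperSubterm (UTerm.fn f (s i)) (UTerm.fn f (s (i + 1)))

def occs {k : ℕ} (f : Fin k) : UTerm k → List (UTerm k)
  | const => []
  | fn g u => (if g = f then [u] else []) ++ occs f u

lemma dep_le_of_subterm {k : ℕ} {s t : UTerm k} (h : Subterm s t) : dep s ≤ dep t := by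
  induction h with
  | refl => exact le_rfl
  | fn _ ih => simp only [dep]; omega

lemma mem_occs_subterm {k : ℕ} {f : Fin k} {u t : UTerm k} (h : u ∈ occs f t) :
    Subterm (fn f u) t := by
  induction t with
  | const => simp [occs] at h
  | fn g v ih =>
    simp only [occs, List.mem_append] at h
    rcases h with h | h
    · rcases Decidable.em (g = f) with hg | hg
      · simp [hg] at h
        subst hg; subst h; exact Subterm.refl _
      · simp [hg] at h
    · exact Subterm.fn (ih h)

lemma occs_pairwise {k : ℕ} (f : Fin k) (t : UTerm k) :
    List.Pairwise (fun a b => ProperSubterm (fn f b) (fn f a)) (occs f t) := by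
  induction t with
  | const => simp [occs]
  | fn g v ih =>
    simp only [occs]
    rcases Decidable.em (g = f) with hg | hg
    · simp only [hg, if_pos rfl, List.singleton_append]
      refine List.pairwise_cons.mpr ⟨fun b hb => ?_, ih⟩
      have hsub : Subterm (fn f b) v := mem_occs_subterm hb
      refine ⟨Subterm.fn hsub, fun heq => ?_⟩
      have := dep_le_of_subterm hsub
      have hb' : b = v := by injection heq
      subst hb'
      simp [dep] at this
    · simpa [hg] using ih

lemma dep_eq_sum_occs {k : ℕ} (t : UTerm k) :
    dep t = ∑ f : Fin k, (occs f t).length := by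
  induction t with
  | const => simp [dep, occs]
  | fn g v ih =>
    simp only [dep, occs, List.length_append, ih, Finset.sum_add_distrib]
    congr 1
    have : ∀ f : Fin k, (if g = f then [v] else []).length = if g = f then 1 else 0 := by
      intro f; split <;> simp
    simp [this]

end UTerm

theorem dep_le_of_no_ncyclic_subterm {k n : ℕ} (hn : 1 ≤ n) (t : UTerm k)
    (h : ∀ s : UTerm k, UTerm.Subterm s t → ¬ UTerm.NCyclic n s) :
    UTerm.dep t ≤ n * k := by
  by_contra hlt
  push_neg at hlt
  -- pigeonhole: some f has at least n+1 occurrences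
  have : ∃ f : Fin k, n + 1 ≤ (UTerm.occs f t).length := by
    by_contra hall
    push_neg at hall
    have hsum : ∑ f : Fin k, (UTerm.occs f t).length ≤ ∑ _f : Fin k, n :=
      Finset.sum_le_sum (fun f _ => by have := hall f; omega)
    rw [← UTerm.dep_eq_sum_occs] at hsum
    simp [Finset.sum_const] at hsum
    rw [Nat.mul_comm] at hsum
    omega
  obtain ⟨f, hf⟩ := this
  set L := UTerm.occs f t with hL
  apply h t (UTerm.Subterm.refl t)
  refine ⟨f, fun i => L.getD (n + 1 - i) UTerm.const, ?_, ?_⟩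
  · have h0 : 0 < L.length := by omega
    show UTerm.Subterm (UTerm.fn f (L.getD (n + 1 - (n + 1)) UTerm.const)) t
    rw [show n + 1 - (n + 1) = 0 from by omega, List.getD_eq_getElem L _ h0]
    exact UTerm.mem_occs_subterm (List.getElem_mem h0)
  · intro i h1 h2
    show UTerm.ProperSubterm (UTerm.fn f (L.getD (n + 1 - i) UTerm.const))
      (UTerm.fn f (L.getD (n + 1 - (i + 1)) UTerm.const))
    have hi1 : n + 1 - i < L.length := by omega
    have hi2 : n + 1 - (i + 1) < L.length := by omega
    rw [List.getD_eq_getElem L _ hi1, List.getD_eq_getElem L _ hi2]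
    have hp := List.pairwise_iff_getElem.mp (UTerm.occs_pairwise f t)
    exact hp (n + 1 - (i + 1)) (n + 1 - i) hi2 hi1 (by omega)
end

section
/- If a TBox with k existential axioms is RCA_n witnessed by an overchase containing no n-cyclic term, then every term in its overchase has depth at most n·k, and hence the overchase is finite. -/
/-- A term occurs in a set of facts if it appears in the argument list of some fact. -/
def Occurs {P : Type} {k : ℕ} (O : Set (P × List (UTerm k))) (t : UTerm k) : Prop :=
  ∃ x ∈ O, t ∈ x.2

namespace UTerm

/-- arguments of occurrences of `f` along the spine, outermost first -/
def args {k : ℕ} (f : Fin k) : UTerm k → List (UTerm k)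
  | const => []
  | fn g u => (if g = f then [u] else []) ++ args f u

lemma subterm_of_mem_args {k : ℕ} {f : Fin k} {u t : UTerm k}
    (h : u ∈ args f t) : Subterm (fn f u) t := by
  induction t with
  | const => simp [args] at h
  | fn g v ih =>
    simp only [args, List.mem_append] at h
    rcases h with h | h
    · split at h
      · next hg =>
        simp at h
        subst hg; subst h
        exact Subterm.refl _
      · simp at h
    · exact Subterm.fn (ih h)

lemma proper_of_subterm {k : ℕ} {f : Fin k} {b u : UTerm k}
    (h : Subterm (fn f b) u) : ProperSubterm (fn f b) (fn f u) := by
  refine ⟨Subterm.fn h, fun he => ?_⟩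
  have h1 := dep_le_of_subterm h
  rw [he] at h1
  simp only [dep] at h1
  omega

lemma chain_args {k : ℕ} (f : Fin k) (t : UTerm k) :
    List.Chain' (fun a b => ProperSubterm (fn f b) (fn f a)) (args f t) := by
  induction t with
  | const => simp [args]; exact List.isChain_nil
  | fn g v ih =>
    by_cases hg : g = f
    · have hargs : args f (fn g v) = v :: args f v := by simp [args, hg]
      rw [hargs, List.Chain', List.isChain_cons]
      refine ⟨fun y hy => ?_, ih⟩
      have : y ∈ args f v := List.mem_of_mem_head? hy
      exact proper_of_subterm (subterm_of_mem_args this)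
    · simpa [args, hg] using ih

lemma args_length_le {P : Type} {k n : ℕ}
    (O : Set (P × List (UTerm k)))
    (hacyclic : ∀ t : UTerm k, Occurs O t → ¬ UTerm.NCyclic n t)
    (t : UTerm k) (ht : Occurs O t) (f : Fin k) : (args f t).length ≤ n := by
  by_contra hlen
  push_neg at hlen
  set L := args f t with hL
  apply hacyclic t ht
  refine ⟨f, fun i => L.getD (n + 1 - i) const, ?_, ?_⟩
  · have h0 : (0 : ℕ) < L.length := by omega
    show Subterm (fn f (L.getD (n + 1 - (n + 1)) const)) t
    rw [show n + 1 - (n + 1) = 0 from by omega, List.getD_eq_getElem _ _ h0]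
    exact subterm_of_mem_args (by rw [← hL]; exact List.getElem_mem h0)
  · intro i hi1 hin
    have hj1 : n - i + 1 < L.length := by omega
    have hj0 : n - i < L.length := by omega
    have hsucc : n + 1 - (i + 1) = n - i := by omega
    have hidx : n + 1 - i = n - i + 1 := by omega
    show ProperSubterm (fn f (L.getD (n + 1 - i) const)) (fn f (L.getD (n + 1 - (i + 1)) const))
    rw [hsucc, hidx, List.getD_eq_getElem _ _ hj1, List.getD_eq_getElem _ _ hj0]
    have hch := chain_args f t
    rw [← hL] at hch
    have hc := (List.isChain_iff_getElem.mp hch) (n - i) (by omega)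
    simpa [List.get_eq_getElem] using hc

lemma dep_eq_sum {k : ℕ} (t : UTerm k) :
    dep t = ∑ f : Fin k, (args f t).length := by
  induction t with
  | const => simp [dep, args]
  | fn g v ih =>
    simp only [dep, args, List.length_append, ih, Finset.sum_add_distrib]
    congr 1
    have : ∀ f : Fin k, (if g = f then [v] else []).length = if f = g then 1 else 0 := by
      intro f
      by_cases h : g = f <;> simp [h, eq_comm]
    simp [this]

/-- injective encoding of terms as lists -/
def enc {k : ℕ} : UTerm k → List (Fin k)
  | const => []
  | fn f t => f :: enc t

lemma enc_injective {k : ℕ} : Function.Injective (enc (k := k)) := by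
  intro a
  induction a with
  | const => intro b hb; cases b <;> simp [enc] at hb ⊢
  | fn f t ih =>
    intro b hb
    cases b with
    | const => simp [enc] at hb
    | fn g u =>
      simp only [enc, List.cons.injEq] at hb
      rw [hb.1, ih hb.2]

lemma length_enc {k : ℕ} (t : UTerm k) : (enc t).length = dep t := by
  induction t with
  | const => simp [enc, dep]
  | fn f u ih => simp [enc, dep, ih]; omega

lemma finite_dep_le (k d : ℕ) : {t : UTerm k | dep t ≤ d}.Finite := by
  have hsub : {t : UTerm k | dep t ≤ d} ⊆ enc ⁻¹' {l : List (Fin k) | l.length ≤ d} := by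
    intro t ht
    simpa [Set.mem_preimage, length_enc] using ht
  exact Set.Finite.subset
    ((List.finite_length_le (Fin k) d).preimage (enc_injective.injOn)) hsub

end UTerm

theorem rca_overchase_finite {P : Type} [Fintype P] {k n : ℕ} (hn : 1 ≤ n)
    (O : Set (P × List (UTerm k)))
    (harity : ∀ x ∈ O, x.2.length ≤ 2)
    (hclosed : ∀ t : UTerm k, Occurs O t → ∀ s : UTerm k, UTerm.Subterm s t → Occurs O s)
    (hacyclic : ∀ t : UTerm k, Occurs O t → ¬ UTerm.NCyclic n t) :
    (∀ t : UTerm k, Occurs O t → UTerm.dep t ≤ n * k) ∧ O.Finite := by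
  have hdep : ∀ t : UTerm k, Occurs O t → UTerm.dep t ≤ n * k := by
    intro t ht
    rw [UTerm.dep_eq_sum t]
    calc ∑ f : Fin k, (UTerm.args f t).length ≤ ∑ _f : Fin k, n :=
          Finset.sum_le_sum fun f _ => UTerm.args_length_le O hacyclic t ht f
      _ = n * k := by simp [mul_comm]
  refine ⟨hdep, ?_⟩
  -- finiteness
  have hT : {t : UTerm k | UTerm.dep t ≤ n * k}.Finite := UTerm.finite_dep_le k (n * k)
  set T := {t : UTerm k | UTerm.dep t ≤ n * k} with hTdef
  have : Finite ↥T := hT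
  have hS : {l : List (UTerm k) | l.length ≤ 2 ∧ ∀ t ∈ l, t ∈ T}.Finite := by
    have himg : {l : List (UTerm k) | l.length ≤ 2 ∧ ∀ t ∈ l, t ∈ T} ⊆
        (fun l : List ↥T => l.map Subtype.val) '' {l : List ↥T | l.length ≤ 2} := by
      rintro l ⟨hlen, hmem⟩
      refine ⟨l.attach.map (fun x => ⟨x.1, hmem x.1 x.2⟩), by simpa using hlen, ?_⟩
      simp [List.map_map, Function.comp]
    exact Set.Finite.subset (Set.Finite.image _ (List.finite_length_le _ 2)) himg
  have hsub : O ⊆ (Set.univ : Set P) ×ˢ {l : List (UTerm k) | l.length ≤ 2 ∧ ∀ t ∈ l, t ∈ T} := by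
    intro x hx
    refine ⟨Set.mem_univ _, harity x hx, fun t htx => ?_⟩
    exact hdep t ⟨x, hx, htx⟩
  exact Set.Finite.subset (Set.Finite.prod Set.finite_univ hS) hsub
end
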